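/- arXiv:1001.2777 — 8 statements merged into one kernel-verified Lean document; each statement's English description precedes it below -/
import Mathlib

section
/- Let n ≥ 4 be a natural number and χ ≤ 2 an integer such that 6·((n : ℤ) − χ) ≤ n·(n − 1). Then (n : ℝ) ≥ (7 + Real.sqrt (49 − 24·χ))/2; in particular n ≥ ⌈(7 + Real.sqrt (49 − 24·χ))/2⌉. -/
theorem heawood_bound (n : ℕ) (χ : ℤ)
    (hn : 4 ≤ n) (hχ : χ ≤ 2)
    (h : 6 * ((n : ℤ) - χ) ≤ (n : ℤ) * ((n : ℤ) - 1)) :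
    (n : ℝ) ≥ (7 + Real.sqrt (49 - 24 * (χ : ℝ))) / 2 ∧
      (n : ℤ) ≥ ⌈(7 + Real.sqrt (49 - 24 * (χ : ℝ))) / 2⌉ := by
  have hn' : (4 : ℝ) ≤ (n : ℝ) := by exact_mod_cast hn
  have hR : 6 * ((n : ℝ) - (χ : ℝ)) ≤ (n : ℝ) * ((n : ℝ) - 1) := by exact_mod_cast h
  have hsq : (49 : ℝ) - 24 * (χ : ℝ) ≤ (2 * (n : ℝ) - 7) ^ 2 := by nlinarith
  have hpos : (0 : ℝ) ≤ 2 * (n : ℝ) - 7 := by linarith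
  have hs : Real.sqrt (49 - 24 * (χ : ℝ)) ≤ 2 * (n : ℝ) - 7 := by
    calc Real.sqrt (49 - 24 * (χ : ℝ)) ≤ Real.sqrt ((2 * (n : ℝ) - 7) ^ 2) :=
          Real.sqrt_le_sqrt hsq
      _ = 2 * (n : ℝ) - 7 := by rw [Real.sqrt_sq hpos]
  have h1 : (n : ℝ) ≥ (7 + Real.sqrt (49 - 24 * (χ : ℝ))) / 2 := by linarith
  refine ⟨h1, ?_⟩
  have := Int.ceil_le.mpr (show (7 + Real.sqrt (49 - 24 * (χ : ℝ))) / 2 ≤ ((n : ℤ) : ℝ) by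
    push_cast; linarith)
  exact this
end

section
/- Let G be a simple graph on a nonempty finite vertex set of cardinality n, let χ ≤ 0 be an integer, and suppose the number of edges of G equals 3·(n − χ) (as integers, where n − χ > 0). Then the minimum vertex degree δ(G) of G satisfies δ(G) ≤ ⌊(5 + Real.sqrt (49 − 24·χ))/2⌋. -/
theorem graph_min_degree_bound {V : Type*} [Fintype V] [Nonempty V]
    (G : SimpleGraph V) [DecidableRel G.Adj] (χ : ℤ)
    (hχ : χ ≤ 0)
    (hE : (G.edgeFinset.card : ℤ) = 3 * ((Fintype.card V : ℤ) - χ)) :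
    (G.minDegree : ℤ) ≤ ⌊(5 + Real.sqrt (49 - 24 * (χ : ℝ))) / 2⌋ := by
  rw [Int.le_floor]
  set δ : ℕ := G.minDegree with hδ
  set n : ℕ := Fintype.card V with hn
  have hs0 : (0:ℝ) ≤ 49 - 24 * (χ:ℝ) := by
    have : (χ:ℝ) ≤ 0 := by exact_mod_cast hχ
    linarith
  set s : ℝ := Real.sqrt (49 - 24 * (χ:ℝ)) with hs
  have hs2 : s ^ 2 = 49 - 24 * (χ:ℝ) := Real.sq_sqrt hs0
  have hs7 : (7:ℝ) ≤ s := by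
    have : Real.sqrt 49 ≤ s := by
      apply Real.sqrt_le_sqrt
      have : (χ:ℝ) ≤ 0 := by exact_mod_cast hχ
      linarith
    have h49 : Real.sqrt 49 = 7 := by
      rw [show (49:ℝ) = 7^2 by norm_num, Real.sqrt_sq (by norm_num)]
    linarith [this, h49.symm.le.trans this]
  by_cases h6 : δ ≤ 6
  · have : (δ:ℝ) ≤ 6 := by exact_mod_cast h6
    push_cast
    linarith
  · push_neg at h6
    have h7 : (7:ℕ) ≤ δ := h6
    -- sum of degrees
    have hsum : ∑ v, G.degree v = 2 * G.edgeFinset.card :=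
      G.sum_degrees_eq_twice_card_edges
    have hlow : n * δ ≤ ∑ v, G.degree v := by
      calc n * δ = ∑ _v : V, δ := by simp [hn, mul_comm]
        _ ≤ ∑ v, G.degree v := Finset.sum_le_sum fun v _ => G.minDegree_le_degree v
    have hnd : (n:ℤ) * δ ≤ 6 * ((n:ℤ) - χ) := by
      have := hlow.trans_eq hsum
      have : ((n:ℤ)) * δ ≤ 2 * (G.edgeFinset.card : ℤ) := by exact_mod_cast this
      linarith [hE ▸ this]
    -- δ ≤ n - 1
    have hδn : δ + 1 ≤ n := by
      obtain ⟨v⟩ := ‹Nonempty V›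
      have h1 := G.minDegree_le_degree v
      have h2 := G.degree_lt_card_verts v
      omega
    have hδn' : (δ:ℤ) + 1 ≤ (n:ℤ) := by exact_mod_cast hδn
    have key : ((δ:ℤ) - 6) * ((δ:ℤ) + 1) ≤ -6 * χ := by
      have hpos : (0:ℤ) ≤ (δ:ℤ) - 6 := by omega
      nlinarith [mul_le_mul_of_nonneg_left hδn' hpos]
    have keyR : ((δ:ℝ) - 6) * ((δ:ℝ) + 1) ≤ -6 * (χ:ℝ) := by exact_mod_cast key
    push_cast
    by_contra hcon
    push_neg at hcon
    have h1 : s < 2 * (δ:ℝ) - 5 := by linarith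
    have h2 : (0:ℝ) ≤ s := Real.sqrt_nonneg _
    nlinarith [sq_nonneg (2 * (δ:ℝ) - 5 - s)]
end

section
/- Let n ≥ 1 and q ≥ 3 be natural numbers and χ ≤ 0 an integer such that q ≤ n − 1 and (n : ℤ)·(6 − q) = 6·χ. Then (q : ℝ) ≤ (5 + Real.sqrt (49 − 24·χ))/2; in particular q ≤ ⌊(5 + Real.sqrt (49 − 24·χ))/2⌋. -/
theorem equivelar_degree_bound (n q : ℕ) (χ : ℤ)
    (hn : 1 ≤ n) (hq : 3 ≤ q) (hχ : χ ≤ 0)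
    (hqn : q ≤ n - 1)
    (h : (n : ℤ) * (6 - q) = 6 * χ) :
    (q : ℝ) ≤ (5 + Real.sqrt (49 - 24 * (χ : ℝ))) / 2 ∧
      (q : ℤ) ≤ ⌊(5 + Real.sqrt (49 - 24 * (χ : ℝ))) / 2⌋ := by
  have hn' : (q : ℤ) + 1 ≤ (n : ℤ) := by
    have : q + 1 ≤ n := by omega
    exact_mod_cast this
  have key : ((2 * (q : ℤ) - 5))^2 ≤ 49 - 24 * χ := by
    rcases le_or_gt (q : ℤ) 6 with hle | hgt
    · nlinarith
    · nlinarith [mul_le_mul_of_nonneg_right hn' (by linarith : (0:ℤ) ≤ (q:ℤ) - 6)]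
  have keyR : ((2 * (q : ℝ) - 5))^2 ≤ 49 - 24 * (χ : ℝ) := by exact_mod_cast key
  have hq3 : (3 : ℝ) ≤ (q : ℝ) := by exact_mod_cast hq
  have hs : 2 * (q : ℝ) - 5 ≤ Real.sqrt (49 - 24 * (χ : ℝ)) := by
    calc 2 * (q : ℝ) - 5 = Real.sqrt ((2 * (q : ℝ) - 5)^2) := by
          rw [Real.sqrt_sq (by linarith)]
      _ ≤ Real.sqrt (49 - 24 * (χ : ℝ)) := Real.sqrt_le_sqrt keyR
  have h1 : (q : ℝ) ≤ (5 + Real.sqrt (49 - 24 * (χ : ℝ))) / 2 := by linarith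
  refine ⟨h1, ?_⟩
  rw [Int.le_floor]
  exact_mod_cast h1
end

section
/- Let d, δ be integers and f0 ≥ 1 an integer and χ ≤ 0 an integer such that d ≤ 2·δ, δ ≤ f0 − 1, and f0·δ ≤ 6·(f0 − χ). Then d ≤ 2·⌊(5 + Real.sqrt (49 − 24·χ))/2⌋. -/
theorem covered_bound_nonpos_chi (d δ f0 χ : ℤ)
    (hf0 : 1 ≤ f0) (hχ : χ ≤ 0)
    (hd : d ≤ 2 * δ) (hδ : δ ≤ f0 - 1)
    (h : f0 * δ ≤ 6 * (f0 - χ)) :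
    d ≤ 2 * ⌊(5 + Real.sqrt (49 - 24 * (χ : ℝ))) / 2⌋ := by
  have hs7 : (7 : ℝ) ≤ Real.sqrt (49 - 24 * (χ : ℝ)) := by
    have : ((7 : ℝ)) ^ 2 ≤ 49 - 24 * (χ : ℝ) := by
      have : (χ : ℝ) ≤ 0 := by exact_mod_cast hχ
      nlinarith
    nlinarith [Real.sq_sqrt (by nlinarith [this] : (0:ℝ) ≤ 49 - 24 * (χ:ℝ)),
      Real.sqrt_nonneg (49 - 24 * (χ:ℝ))]
  have key : δ ≤ ⌊(5 + Real.sqrt (49 - 24 * (χ : ℝ))) / 2⌋ := by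
    rcases le_or_gt δ 6 with h6 | h6
    · refine le_trans h6 (Int.le_floor.mpr ?_)
      push_cast
      linarith
    · have hint : (δ + 1) * (δ - 6) ≤ -6 * χ := by nlinarith
      rw [Int.le_floor]
      have hnn : (0:ℝ) ≤ 2 * (δ:ℝ) - 5 := by
        have : (7:ℤ) ≤ δ := h6
        have : (7:ℝ) ≤ (δ:ℝ) := by exact_mod_cast this
        linarith
      have hsq : (2 * (δ:ℝ) - 5) ^ 2 ≤ 49 - 24 * (χ:ℝ) := by
        have : ((δ:ℝ) + 1) * ((δ:ℝ) - 6) ≤ -6 * (χ:ℝ) := by exact_mod_cast hint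
        nlinarith
      have h1 : 2 * (δ:ℝ) - 5 ≤ Real.sqrt (49 - 24 * (χ:ℝ)) := by
        nlinarith [Real.sq_sqrt (by nlinarith [hsq, sq_nonneg (2*(δ:ℝ)-5)] : (0:ℝ) ≤ 49 - 24 * (χ:ℝ)),
          Real.sqrt_nonneg (49 - 24 * (χ:ℝ))]
      push_cast
      linarith
  linarith
end

section
/- Let δ be an integer, f0 ≥ 1 an integer, and χ ≤ 0 an integer such that δ ≤ f0 − 1 and f0·δ ≤ 6·(f0 − χ). Then δ ≤ ⌊(5 + Real.sqrt (49 − 24·χ))/2⌋. -/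
theorem regular_cell_min_degree_nonpos_chi (δ f0 χ : ℤ)
    (hf0 : 1 ≤ f0) (hχ : χ ≤ 0)
    (hδ : δ ≤ f0 - 1)
    (h : f0 * δ ≤ 6 * (f0 - χ)) :
    δ ≤ ⌊(5 + Real.sqrt (49 - 24 * (χ : ℝ))) / 2⌋ := by
  rw [Int.le_floor]
  have hsq : ((2 * δ - 5 : ℤ) : ℝ) ≤ Real.sqrt (49 - 24 * (χ : ℝ)) := by
    rcases le_or_gt δ 6 with h6 | h6
    · calc ((2 * δ - 5 : ℤ) : ℝ) ≤ 7 := by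
            have : (δ:ℝ) ≤ 6 := by exact_mod_cast h6
            push_cast; linarith
        _ = Real.sqrt 49 := by
            rw [show (49 : ℝ) = 7 ^ 2 by norm_num, Real.sqrt_sq (by norm_num)]
        _ ≤ Real.sqrt (49 - 24 * (χ : ℝ)) := by
            apply Real.sqrt_le_sqrt
            have : (χ : ℝ) ≤ 0 := by exact_mod_cast hχ
            linarith
    · have key : δ ^ 2 - 5 * δ - 6 ≤ -6 * χ := by
        have h1 : f0 * (δ - 6) ≤ -6 * χ := by linarith
        have h2 : (δ + 1) * (δ - 6) ≤ f0 * (δ - 6) := by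
          apply mul_le_mul_of_nonneg_right <;> omega
        nlinarith
      have hδr : (6:ℝ) < (δ:ℝ) := by exact_mod_cast h6
      have hχr : (χ:ℝ) ≤ 0 := by exact_mod_cast hχ
      rw [Real.le_sqrt (by push_cast; linarith) (by linarith)]
      have : (2 * δ - 5) ^ 2 ≤ 49 - 24 * χ := by nlinarith
      push_cast
      have h' : (((2 * δ - 5) ^ 2 : ℤ) : ℝ) ≤ ((49 - 24 * χ : ℤ) : ℝ) := Int.cast_le.mpr this
      push_cast at h' ⊢
      linarith
  have h0 := Real.sqrt_nonneg (49 - 24 * (χ : ℝ))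
  push_cast at hsq ⊢
  linarith
end

section
/- Let p ≥ 5 be a prime and let n ≥ 1 and q be natural numbers such that q ≤ n − 1 and (n : ℤ)·((q : ℤ) − 6) = 6·p. Then q = 7 or q = 8 or q = 9 or q = 12. -/
theorem equivelar_prime_chi (p n q : ℕ)
    (hp : p.Prime) (hp5 : 5 ≤ p)
    (hn : 1 ≤ n) (hqn : q ≤ n - 1)
    (h : (n : ℤ) * ((q : ℤ) - 6) = 6 * p) :
    q = 7 ∨ q = 8 ∨ q = 9 ∨ q = 12 := by
  have hp5' : (5 : ℤ) ≤ p := by exact_mod_cast hp5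
  have hn' : (1 : ℤ) ≤ n := by exact_mod_cast hn
  have hq7 : 7 ≤ q := by
    by_contra hlt
    push_neg at hlt
    have hq6 : (q : ℤ) ≤ 6 := by exact_mod_cast Nat.lt_succ_iff.mp hlt
    nlinarith
  have hn8 : 8 ≤ n := by omega
  have hdvd : (n : ℤ) ∣ 6 * p := ⟨(q : ℤ) - 6, h.symm⟩
  have hdvdN : n ∣ 6 * p := by exact_mod_cast hdvd
  have hpn : p ∣ n := by
    by_contra hnd
    have hcop : Nat.Coprime n p := (hp.coprime_iff_not_dvd.mpr hnd).symm
    have h6 : n ∣ 6 := (Nat.Coprime.dvd_of_dvd_mul_right hcop hdvdN)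
    have := Nat.le_of_dvd (by norm_num) h6
    omega
  obtain ⟨m, rfl⟩ := hpn
  have hp0 : (p : ℤ) ≠ 0 := by positivity
  have key : (m : ℤ) * ((q : ℤ) - 6) = 6 := by
    apply mul_left_cancel₀ hp0
    push_cast at h ⊢
    linarith [h]
  have hq7' : (7 : ℤ) ≤ q := by exact_mod_cast hq7
  have hm1 : 1 ≤ m := by
    rcases Nat.eq_zero_or_pos m with h0 | h1
    · subst h0; simp at hn8
    · exact h1
  have hm6 : m ≤ 6 := by
    by_contra hgt
    push_neg at hgt
    have : (7 : ℤ) ≤ m := by exact_mod_cast hgt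
    nlinarith
  interval_cases m <;> omega
end

section
/- Let k ≥ 1 and m ≥ 0 be natural numbers, set n = 7 + 12·k + m and χ = −2·(k : ℤ)·n. Then ⌊(5 + Real.sqrt (49 − 24·χ))/2⌋ = 6 + 12·k if and only if m ≤ 2. -/
theorem generalized_ringel_equality_iff (k m : ℕ) (hk : 1 ≤ k) :
    (⌊(5 + Real.sqrt (49 - 24 * ((-2 * (k : ℤ) * (7 + 12 * k + m) : ℤ) : ℝ))) / 2⌋
        = 6 + 12 * (k : ℤ)) ↔ m ≤ 2 := by
  have hk' : (1:ℝ) ≤ (k:ℕ) := by exact_mod_cast hk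
  have hA : (49 - 24 * ((-2 * (k : ℤ) * (7 + 12 * k + m) : ℤ) : ℝ))
      = (7 + 24*(k:ℝ))^2 + 48*(k:ℝ)*(m:ℝ) := by push_cast; ring
  rw [hA, Int.floor_eq_iff]
  have hm0 : (0:ℝ) ≤ (m:ℝ) := Nat.cast_nonneg m
  have ha : (0:ℝ) ≤ 7 + 24*(k:ℝ) := by linarith
  constructor
  · rintro ⟨-, h2⟩
    have h3 : Real.sqrt ((7 + 24*(k:ℝ))^2 + 48*(k:ℝ)*(m:ℝ)) < 9 + 24*(k:ℝ) := by
      push_cast at h2; linarith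
    have h4 : (7 + 24*(k:ℝ))^2 + 48*(k:ℝ)*(m:ℝ) < (9 + 24*(k:ℝ))^2 := by
      have := (Real.sqrt_lt' (by linarith : (0:ℝ) < 9 + 24*(k:ℝ))).mp h3
      linarith [this]
    by_contra hm
    push_neg at hm
    have : (3:ℝ) ≤ (m:ℝ) := by exact_mod_cast hm
    nlinarith
  · intro hm
    have hm' : (m:ℝ) ≤ 2 := by exact_mod_cast hm
    have hlow : 7 + 24*(k:ℝ) ≤ Real.sqrt ((7 + 24*(k:ℝ))^2 + 48*(k:ℝ)*(m:ℝ)) := by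
      nth_rewrite 1 [← Real.sqrt_sq ha]
      exact Real.sqrt_le_sqrt (by nlinarith)
    have hhigh : Real.sqrt ((7 + 24*(k:ℝ))^2 + 48*(k:ℝ)*(m:ℝ)) < 9 + 24*(k:ℝ) := by
      rw [Real.sqrt_lt' (by linarith)]
      nlinarith
    constructor
    · push_cast; linarith
    · push_cast; linarith
end

section
/- Let k ≥ 1 be a natural number, set n = 8 + 12·k and χ = −2·(k : ℤ)·n. Then ⌈(7 + Real.sqrt (49 − 24·χ))/2⌉ = 8 + 12·k. -/
theorem generalized_ringel_vertex_minimal (k : ℕ) (hk : 1 ≤ k) :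
    ⌈(7 + Real.sqrt (49 - 24 * ((-2 * (k : ℤ) * (8 + 12 * k) : ℤ) : ℝ))) / 2⌉
      = 8 + 12 * (k : ℤ) := by
  have hk' : (1:ℝ) ≤ k := by exact_mod_cast hk
  have hD : (49 - 24 * ((-2 * (k : ℤ) * (8 + 12 * k) : ℤ) : ℝ))
      = 576*(k:ℝ)^2 + 384*k + 49 := by push_cast; ring
  rw [hD]
  have h0 : (0:ℝ) ≤ 576*(k:ℝ)^2 + 384*k + 49 := by positivity
  have hsq := Real.sq_sqrt h0
  have hsn := Real.sqrt_nonneg (576*(k:ℝ)^2 + 384*k + 49)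
  set s := Real.sqrt (576*(k:ℝ)^2 + 384*k + 49) with hs
  have h1 : s < 24*k+8 := by nlinarith
  have h2 : 24*k+7 < s := by nlinarith
  rw [Int.ceil_eq_iff]
  constructor <;> push_cast <;> nlinarith
end
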